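/- For all vectors u = (u₁, u₂) and v = (v₁, v₂) in ℤ², the congruence u₁·v₂ − u₂·v₁ ≡ gcd(u₁, u₂) + gcd(v₁, v₂) + gcd(u₁+v₁, u₂+v₂) (mod 2) holds. (This is the congruence, derived in the paper from Pick's formula, stating that the multiplicity of a trivalent vertex of a tropical curve — which is twice the area of the dual lattice triangle, i.e. the absolute value of the determinant of two of its edge vectors — is congruent modulo 2 to the lattice perimeter of that triangle, i.e. the sum of the gcds of the coordinates of its three edge vectors u, v and −(u+v).) -/

import Mathlib

lemma gcd_mod_two (a b : ℤ) : (Int.gcd a b : ℤ) ≡ a + b + a * b [ZMOD 2] := by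
  have hg : (Int.gcd a b : ℤ) % 2 = 0 ↔ a % 2 = 0 ∧ b % 2 = 0 := by
    rw [← Int.dvd_iff_emod_eq_zero, ← Int.dvd_iff_emod_eq_zero, ← Int.dvd_iff_emod_eq_zero]
    constructor
    · intro h
      exact ⟨h.trans (Int.gcd_dvd_left a b), h.trans (Int.gcd_dvd_right a b)⟩
    · rintro ⟨h1, h2⟩
      exact Int.dvd_coe_gcd h1 h2
  rw [Int.ModEq]
  rcases Int.even_or_odd a with ⟨x, hx⟩ | ⟨x, hx⟩ <;>
    rcases Int.even_or_odd b with ⟨y, hy⟩ | ⟨y, hy⟩ <;> subst hx hy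
  · obtain ⟨m, hm⟩ : ∃ m, (x + x) * (y + y) = 2 * m := ⟨2 * x * y, by ring⟩
    rw [hm]; omega
  · obtain ⟨m, hm⟩ : ∃ m, (x + x) * (2 * y + 1) = 2 * m := ⟨x * (2 * y + 1), by ring⟩
    rw [hm]; omega
  · obtain ⟨m, hm⟩ : ∃ m, (2 * x + 1) * (y + y) = 2 * m := ⟨(2 * x + 1) * y, by ring⟩
    rw [hm]; omega
  · obtain ⟨m, hm⟩ : ∃ m, (2 * x + 1) * (2 * y + 1) = 2 * m + 1 := ⟨2 * x * y + x + y, by ring⟩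
    rw [hm]; omega

/-- For all `u = (u₁,u₂)` and `v = (v₁,v₂)` in `ℤ²`, the determinant `u₁v₂ − u₂v₁` is
congruent modulo 2 to `gcd(u₁,u₂) + gcd(v₁,v₂) + gcd(u₁+v₁,u₂+v₂)`: the multiplicity
of a trivalent vertex of a tropical curve is congruent mod 2 to the lattice perimeter
of the dual triangle. -/
theorem det_modEq_lattice_perimeter (u₁ u₂ v₁ v₂ : ℤ) :
    u₁ * v₂ - u₂ * v₁ ≡
      (Int.gcd u₁ u₂ : ℤ) + (Int.gcd v₁ v₂ : ℤ) + (Int.gcd (u₁ + v₁) (u₂ + v₂) : ℤ)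
      [ZMOD 2] := by
  have h := ((gcd_mod_two u₁ u₂).add (gcd_mod_two v₁ v₂)).add
    (gcd_mod_two (u₁ + v₁) (u₂ + v₂))
  refine Int.ModEq.trans ?_ h.symm
  rw [Int.modEq_iff_dvd]
  exact ⟨u₁ + u₂ + v₁ + v₂ + u₁ * u₂ + v₁ * v₂ + u₂ * v₁, by ring⟩
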